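/- Dual-basis thickening: let (H_X, H_Z) be a CSS code with k logical qubits, having at least one X logical operator and at least one Z logical operator, with distances d_X and d_Z, and let H_C ∈ F₂^{(n_c−k_c) × n_c} be a classical parity check matrix of full row rank with ker(H_C) ≠ {0}; let d_c be the minimum Hamming weight of a nonzero element of ker(H_C) and k_c = dim ker(H_C). Define H''_Z = ( H_Z ⊗ I_{n_c} | I_{n_Z} ⊗ H_Cᵀ ) and H''_X = the block matrix with first block row ( H_X ⊗ I_{n_c} | 0 ) and second block row ( I_n ⊗ H_C | H_Zᵀ ⊗ I_{n_c−k_c} ). Then H''_X · (H''_Z)ᵀ = 0; the resulting CSS code has k·k_c logical qubits, its Z distance (minimum Hamming weight over ker(H''_X) \ rowspan(H''_Z)) equals d_Z · d_c, and its X distance (minimum Hamming weight over ker(H''_Z) \ rowspan(H''_X)) equals d_X. -/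

import Mathlib

open Matrix

/-- The `F₂`-span of the rows of a matrix. -/
noncomputable def rowSpan {ι κ : Type*} [Fintype ι] [Fintype κ] (M : Matrix ι κ (ZMod 2)) :
    Submodule (ZMod 2) (κ → ZMod 2) :=
  Submodule.span (ZMod 2) (Set.range fun i => M i)

/-- The kernel `{v : M v = 0}` of a matrix, as a submodule. -/
noncomputable def kerMat {ι κ : Type*} [Fintype ι] [Fintype κ] (M : Matrix ι κ (ZMod 2)) :
    Submodule (ZMod 2) (κ → ZMod 2) :=
  LinearMap.ker M.mulVecLin

/-- Number of logical qubits of a CSS code: `dim (ker H_X / rowspan H_Z)`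
(the quotient of the kernel by the intersection of the row span with the kernel,
which agrees with `ker/rowspan` when `rowspan ⊆ ker`). -/
noncomputable def logicalDim {ι₁ ι₂ κ : Type*} [Fintype ι₁] [Fintype ι₂] [Fintype κ]
    (HX : Matrix ι₁ κ (ZMod 2)) (HZ : Matrix ι₂ κ (ZMod 2)) : ℕ :=
  Module.finrank (ZMod 2) (↥(kerMat HX) ⧸ (rowSpan HZ).comap (kerMat HX).subtype)

/-- The logical operators `ker(Hker) \ rowspan(Hspan)`. -/
def logicalSet {ι₁ ι₂ κ : Type*} [Fintype ι₁] [Fintype ι₂] [Fintype κ]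
    (Hker : Matrix ι₁ κ (ZMod 2)) (Hspan : Matrix ι₂ κ (ZMod 2)) : Set (κ → ZMod 2) :=
  {v | Hker.mulVec v = 0 ∧ v ∉ rowSpan Hspan}

/-- Minimum Hamming weight over a set of vectors. -/
noncomputable def minWt {ι : Type*} [Fintype ι] (S : Set (ι → ZMod 2)) : ℕ :=
  sInf (hammingNorm '' S)

/-- Z check matrix of the dual-basis thickened code: `( H_Z ⊗ I_{n_c} | I_{n_Z} ⊗ H_Cᵀ )`. -/
def dualThickZ {nZ n r nc : ℕ} (HZ : Matrix (Fin nZ) (Fin n) (ZMod 2))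
    (HC : Matrix (Fin r) (Fin nc) (ZMod 2)) :
    Matrix (Fin nZ × Fin nc) ((Fin n × Fin nc) ⊕ (Fin nZ × Fin r)) (ZMod 2) :=
  Matrix.of fun s p =>
    match p with
    | Sum.inl (i, c) => if c = s.2 then HZ s.1 i else 0
    | Sum.inr (z, j) => if z = s.1 then HC j s.2 else 0

/-- X check matrix of the dual-basis thickened code:
first block row `( H_X ⊗ I_{n_c} | 0 )`,
second block row `( I_n ⊗ H_C | H_Zᵀ ⊗ I_{n_c-k_c} )`. -/
def dualThickX {nX nZ n r nc : ℕ} (HX : Matrix (Fin nX) (Fin n) (ZMod 2))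
    (HZ : Matrix (Fin nZ) (Fin n) (ZMod 2)) (HC : Matrix (Fin r) (Fin nc) (ZMod 2)) :
    Matrix ((Fin nX × Fin nc) ⊕ (Fin n × Fin r)) ((Fin n × Fin nc) ⊕ (Fin nZ × Fin r)) (ZMod 2) :=
  Matrix.of fun s p =>
    match s, p with
    | Sum.inl (a, c), Sum.inl (i, c') => if c' = c then HX a i else 0
    | Sum.inl _, Sum.inr _ => 0
    | Sum.inr (i, j), Sum.inl (i', c) => if i' = i then HC j c else 0
    | Sum.inr (i, j), Sum.inr (z, j') => if j' = j then HZ z i else 0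

namespace DT
lemma z2_add_eq_zero (a b : ZMod 2) : a + b = 0 ↔ a = b := by revert a b; decide
lemma mem_rowSpan {ι κ : Type*} [Fintype ι] [Fintype κ] (M : Matrix ι κ (ZMod 2))
    (v : κ → ZMod 2) :
    v ∈ rowSpan M ↔ ∃ x : ι → ZMod 2, ∀ j, v j = ∑ i, x i * M i j := by
  rw [rowSpan, Submodule.mem_span_range_iff_exists_fun]
  constructor
  · rintro ⟨c, hc⟩
    exact ⟨c, fun j => by rw [← hc]; simp [Finset.sum_apply]⟩
  · rintro ⟨x, hx⟩
    refine ⟨x, funext fun j => ?_⟩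
    simp [Finset.sum_apply, (hx j).symm]
lemma mem_kerMat {ι κ : Type*} [Fintype ι] [Fintype κ] (M : Matrix ι κ (ZMod 2))
    (v : κ → ZMod 2) :
    v ∈ kerMat M ↔ ∀ i, ∑ j, M i j * v j = 0 := by
  simp [kerMat, LinearMap.mem_ker, funext_iff, Matrix.mulVec, dotProduct]

variable {nX nZ n r nc : ℕ} (HX : Matrix (Fin nX) (Fin n) (ZMod 2))
  (HZ : Matrix (Fin nZ) (Fin n) (ZMod 2)) (HC : Matrix (Fin r) (Fin nc) (ZMod 2))

lemma mem_kerThickX (v : (Fin n × Fin nc) ⊕ (Fin nZ × Fin r) → ZMod 2) :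
    v ∈ kerMat (dualThickX HX HZ HC) ↔
      (∀ c a, ∑ i, HX a i * v (Sum.inl (i, c)) = 0) ∧
      (∀ i j, ∑ c, HC j c * v (Sum.inl (i, c)) = ∑ z, HZ z i * v (Sum.inr (z, j))) := by
  rw [mem_kerMat]
  rw [Sum.forall]
  constructor
  · rintro ⟨h1, h2⟩
    constructor
    · intro c a
      have := h1 (a, c)
      simpa [dualThickX, Fintype.sum_sum_type, Fintype.sum_prod_type, Finset.sum_comm (γ := Fin n),
        ite_mul, Finset.sum_ite_eq] using this
    · intro i j
      have := h2 (i, j)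
      rw [← z2_add_eq_zero]
      simpa [dualThickX, Fintype.sum_sum_type, Fintype.sum_prod_type, ite_mul,
        Finset.sum_ite_eq] using this
  · rintro ⟨h1, h2⟩
    constructor
    · rintro ⟨a, c⟩
      simpa [dualThickX, Fintype.sum_sum_type, Fintype.sum_prod_type, Finset.sum_comm (γ := Fin n),
        ite_mul, Finset.sum_ite_eq] using h1 c a
    · rintro ⟨i, j⟩
      have := (z2_add_eq_zero _ _).mpr (h2 i j)
      simpa [dualThickX, Fintype.sum_sum_type, Fintype.sum_prod_type, ite_mul,
        Finset.sum_ite_eq] using this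

lemma mem_kerThickZ (v : (Fin n × Fin nc) ⊕ (Fin nZ × Fin r) → ZMod 2) :
    v ∈ kerMat (dualThickZ HZ HC) ↔
      ∀ z c, ∑ i, HZ z i * v (Sum.inl (i, c)) = ∑ j, HC j c * v (Sum.inr (z, j)) := by
  rw [mem_kerMat]
  constructor
  · intro h z c
    have := h (z, c)
    rw [← z2_add_eq_zero]
    simpa [dualThickZ, Fintype.sum_sum_type, Fintype.sum_prod_type,
      Finset.sum_comm (γ := Fin n), ite_mul, Finset.sum_ite_eq] using this
  · rintro h ⟨z, c⟩
    have := (z2_add_eq_zero _ _).mpr (h z c)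
    simpa [dualThickZ, Fintype.sum_sum_type, Fintype.sum_prod_type,
      Finset.sum_comm (γ := Fin n), ite_mul, Finset.sum_ite_eq] using this

lemma mem_spanThickZ (v : (Fin n × Fin nc) ⊕ (Fin nZ × Fin r) → ZMod 2) :
    v ∈ rowSpan (dualThickZ HZ HC) ↔
      ∃ M : Matrix (Fin nZ) (Fin nc) (ZMod 2),
        (∀ i c, v (Sum.inl (i, c)) = ∑ z, M z c * HZ z i) ∧
        (∀ z j, v (Sum.inr (z, j)) = ∑ c, M z c * HC j c) := by
  rw [mem_rowSpan]
  constructor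
  · rintro ⟨x, hx⟩
    refine ⟨fun z c => x (z, c), fun i c => ?_, fun z j => ?_⟩
    · have := hx (Sum.inl (i, c))
      simpa [dualThickZ, Fintype.sum_prod_type, mul_ite, Finset.sum_ite_eq'] using this
    · have := hx (Sum.inr (z, j))
      simpa [dualThickZ, Fintype.sum_prod_type, mul_ite, Finset.sum_ite_eq',
        Finset.sum_comm (γ := Fin nZ)] using this
  · rintro ⟨M, h1, h2⟩
    refine ⟨fun s => M s.1 s.2, fun p => ?_⟩
    match p with
    | Sum.inl (i, c) =>
      simpa [dualThickZ, Fintype.sum_prod_type, mul_ite, Finset.sum_ite_eq'] using h1 i c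
    | Sum.inr (z, j) =>
      simpa [dualThickZ, Fintype.sum_prod_type, mul_ite, Finset.sum_ite_eq',
        Finset.sum_comm (γ := Fin nZ)] using h2 z j

lemma mem_spanThickX (v : (Fin n × Fin nc) ⊕ (Fin nZ × Fin r) → ZMod 2) :
    v ∈ rowSpan (dualThickX HX HZ HC) ↔
      ∃ (A : Matrix (Fin nX) (Fin nc) (ZMod 2)) (B : Matrix (Fin n) (Fin r) (ZMod 2)),
        (∀ i c, v (Sum.inl (i, c)) = (∑ a, A a c * HX a i) + ∑ j, B i j * HC j c) ∧
        (∀ z j, v (Sum.inr (z, j)) = ∑ i, B i j * HZ z i) := by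
  rw [mem_rowSpan]
  constructor
  · rintro ⟨x, hx⟩
    refine ⟨fun a c => x (Sum.inl (a, c)), fun i j => x (Sum.inr (i, j)), fun i c => ?_,
      fun z j => ?_⟩
    · have := hx (Sum.inl (i, c))
      simpa [dualThickX, Fintype.sum_sum_type, Fintype.sum_prod_type, mul_ite,
        Finset.sum_ite_eq'] using this
    · have := hx (Sum.inr (z, j))
      simpa [dualThickX, Fintype.sum_sum_type, Fintype.sum_prod_type, mul_ite,
        Finset.sum_ite_eq'] using this
  · rintro ⟨A, B, h1, h2⟩
    refine ⟨Sum.elim (fun s => A s.1 s.2) (fun s => B s.1 s.2), fun p => ?_⟩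
    match p with
    | Sum.inl (i, c) =>
      simpa [dualThickX, Fintype.sum_sum_type, Fintype.sum_prod_type, mul_ite,
        Finset.sum_ite_eq'] using h1 i c
    | Sum.inr (z, j) =>
      simpa [dualThickX, Fintype.sum_sum_type, Fintype.sum_prod_type, mul_ite,
        Finset.sum_ite_eq'] using h2 z j

lemma z2_eq_one {a : ZMod 2} (h : a ≠ 0) : a = 1 := by revert h; revert a; decide

lemma mulVec_eq_zero_iff {ι κ : Type*} [Fintype ι] [Fintype κ] (M : Matrix ι κ (ZMod 2))
    (v : κ → ZMod 2) :
    M.mulVec v = 0 ↔ ∀ i, ∑ j, M i j * v j = 0 := by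
  simp [funext_iff, Matrix.mulVec, dotProduct]

lemma hammingNorm_eq_sum {ι : Type*} [Fintype ι] (v : ι → ZMod 2) :
    hammingNorm v = ∑ i, if v i = 0 then 0 else 1 := by
  rw [hammingNorm, Finset.card_filter]
  exact Finset.sum_congr rfl fun i _ => by by_cases h : v i = 0 <;> simp [h]

lemma exists_leftInv (hrank : LinearIndependent (ZMod 2) (fun i : Fin r => HC i)) :
    ∃ D : Matrix (Fin r) (Fin nc) (ZMod 2),
      ∀ j j', ∑ c, HC j c * D j' c = if j = j' then 1 else 0 := by
  have hinj : LinearMap.ker (HC.transpose.mulVecLin) = ⊥ := by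
    rw [LinearMap.ker_eq_bot']
    intro x hx
    rw [Fintype.linearIndependent_iff] at hrank
    refine funext fun j => hrank x ?_ j
    funext c
    have := congrFun hx c
    simpa [Matrix.mulVecLin, Matrix.mulVec, Matrix.vecMul, dotProduct, Finset.sum_apply,
      mul_comm] using this
  obtain ⟨g, hg⟩ := LinearMap.exists_leftInverse_of_injective _ hinj
  refine ⟨fun j' c => g (Pi.single c 1) j', fun j j' => ?_⟩
  have key : (fun c => HC j c) = HC.transpose.mulVecLin (Pi.single j 1) := by
    funext c
    simp [Matrix.mulVecLin, Matrix.mulVec, dotProduct, Pi.single_apply]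
  have h2 : g (fun c => HC j c) = Pi.single j 1 := by
    rw [key, ← LinearMap.comp_apply, hg, LinearMap.id_apply]
  calc ∑ c, HC j c * g (Pi.single c 1) j'
      = (g (∑ c, HC j c • Pi.single c (1 : ZMod 2))) j' := by
        rw [map_sum]
        simp [Finset.sum_apply]
    _ = (g (fun c => HC j c)) j' := by
        have : (∑ c, HC j c • Pi.single c (1 : ZMod 2)) = (fun c => HC j c) := by
          funext c'
          simp [Finset.sum_apply, Pi.single_apply]
        rw [this]
    _ = if j = j' then 1 else 0 := by rw [h2]; simp [Pi.single_apply, eq_comm]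

lemma exists_functional {x : Fin n → ZMod 2} (hx : x ∉ rowSpan HZ) :
    ∃ f : (Fin n → ZMod 2) →ₗ[ZMod 2] ZMod 2,
      (∀ y ∈ rowSpan HZ, f y = 0) ∧ f x ≠ 0 := by
  have hπx : (rowSpan HZ).mkQ x ≠ 0 := by
    simpa [Submodule.Quotient.mk_eq_zero] using hx
  have := (Module.forall_dual_apply_eq_zero_iff (ZMod 2) ((rowSpan HZ).mkQ x)).not.mpr hπx
  push_neg at this
  obtain ⟨φ, hφ⟩ := this
  refine ⟨φ ∘ₗ (rowSpan HZ).mkQ, fun y hy => ?_, hφ⟩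
  have : (rowSpan HZ).mkQ y = 0 := by simpa [Submodule.Quotient.mk_eq_zero] using hy
  simp [this]


lemma spanZ_of_cols (D : Matrix (Fin r) (Fin nc) (ZMod 2))
    (hD : ∀ j j', ∑ c, HC j c * D j' c = if j = j' then 1 else 0)
    (v : (Fin n × Fin nc) ⊕ (Fin nZ × Fin r) → ZMod 2)
    (hker : v ∈ kerMat (dualThickX HX HZ HC))
    (hcols : ∀ c, (fun i => v (Sum.inl (i, c))) ∈ rowSpan HZ) :
    v ∈ rowSpan (dualThickZ HZ HC) := by
  obtain ⟨-, hk2⟩ := (mem_kerThickX HX HZ HC v).mp hker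
  choose m hm using fun c => (mem_rowSpan HZ _).mp (hcols c)
  set M : Matrix (Fin nZ) (Fin nc) (ZMod 2) := fun z c => m c z with hM
  set y : Matrix (Fin nZ) (Fin r) (ZMod 2) :=
    fun z j => (∑ c, M z c * HC j c) + v (Sum.inr (z, j)) with hy_def
  have hy : ∀ i j, ∑ z, HZ z i * y z j = 0 := by
    intro i j
    have e1 : ∑ z, HZ z i * y z j =
        (∑ c, HC j c * (∑ z, M z c * HZ z i)) + ∑ z, HZ z i * v (Sum.inr (z, j)) := by
      simp only [hy_def, mul_add, Finset.sum_add_distrib, Finset.mul_sum, Finset.sum_mul]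
      congr 1
      rw [Finset.sum_comm]
      exact Finset.sum_congr rfl fun z _ => Finset.sum_congr rfl fun c _ => by ring
    rw [e1]
    have e2 : ∀ c, (∑ z, M z c * HZ z i) = v (Sum.inl (i, c)) := fun c => (hm c i).symm
    simp only [e2]
    rw [hk2 i j]
    exact CharTwo.add_self_eq_zero _
  set N : Matrix (Fin nZ) (Fin nc) (ZMod 2) := fun z c => ∑ j, y z j * D j c with hN
  refine (mem_spanThickZ HZ HC v).mpr ⟨M + N, fun i c => ?_, fun z j => ?_⟩
  · have hNz : ∑ z, N z c * HZ z i = 0 := by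
      have : ∑ z, N z c * HZ z i = ∑ j, D j c * ∑ z, HZ z i * y z j := by
        simp only [hN, Finset.sum_mul, Finset.mul_sum]
        rw [Finset.sum_comm]
        exact Finset.sum_congr rfl fun z _ => Finset.sum_congr rfl fun j _ => by ring
      simp [this, hy]
    simp only [Matrix.add_apply, add_mul, Finset.sum_add_distrib, hNz, add_zero]
    exact hm c i
  · have hNy : ∑ c, N z c * HC j c = y z j := by
      have e : ∑ c, N z c * HC j c = ∑ j', y z j' * ∑ c, HC j c * D j' c := by
        simp only [hN, Finset.sum_mul, Finset.mul_sum]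
        rw [Finset.sum_comm]
        exact Finset.sum_congr rfl fun j' _ => Finset.sum_congr rfl fun c _ => by ring
      rw [e]
      simp [hD, eq_comm]
    simp only [Matrix.add_apply, add_mul, Finset.sum_add_distrib, hNy, hy_def]
    rw [← add_assoc]
    rw [CharTwo.add_self_eq_zero, zero_add]

lemma spanX_of_contractions (D : Matrix (Fin r) (Fin nc) (ZMod 2))
    (hD : ∀ j j', ∑ c, HC j c * D j' c = if j = j' then 1 else 0)
    (v : (Fin n × Fin nc) ⊕ (Fin nZ × Fin r) → ZMod 2)
    (hker : v ∈ kerMat (dualThickZ HZ HC))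
    (hcon : ∀ κ : Fin nc → ZMod 2, HC.mulVec κ = 0 →
      (fun i => ∑ c, v (Sum.inl (i, c)) * κ c) ∈ rowSpan HX) :
    v ∈ rowSpan (dualThickX HX HZ HC) := by
  have hk := (mem_kerThickZ HZ HC v).mp hker
  set B : Matrix (Fin n) (Fin r) (ZMod 2) :=
    fun i j => ∑ c, v (Sum.inl (i, c)) * D j c with hB
  have hR : ∀ c₀, (fun i => v (Sum.inl (i, c₀)) + ∑ j, B i j * HC j c₀) ∈ rowSpan HX := by
    intro c₀
    set κ : Fin nc → ZMod 2 :=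
      fun c => (if c = c₀ then 1 else 0) + ∑ j, D j c * HC j c₀ with hκ
    have hκker : HC.mulVec κ = 0 := by
      rw [mulVec_eq_zero_iff]
      intro j
      have : ∑ c, HC j c * κ c =
          HC j c₀ + ∑ j', (∑ c, HC j c * D j' c) * HC j' c₀ := by
        simp only [hκ, mul_add, Finset.sum_add_distrib, mul_ite, mul_one, mul_zero,
          Finset.sum_ite_eq', Finset.mem_univ, if_true, Finset.mul_sum, Finset.sum_mul]
        congr 1
        rw [Finset.sum_comm]
        exact Finset.sum_congr rfl fun j' _ => Finset.sum_congr rfl fun c _ => by ring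
      rw [this]
      simp [hD]
      exact CharTwo.add_self_eq_zero _
    have := hcon κ hκker
    have e : (fun i => ∑ c, v (Sum.inl (i, c)) * κ c) =
        (fun i => v (Sum.inl (i, c₀)) + ∑ j, B i j * HC j c₀) := by
      funext i
      simp only [hκ, mul_add, Finset.sum_add_distrib, mul_ite, mul_one, mul_zero,
        Finset.sum_ite_eq', Finset.mem_univ, if_true, hB, Finset.mul_sum, Finset.sum_mul]
      congr 1
      rw [Finset.sum_comm]
      exact Finset.sum_congr rfl fun c _ => Finset.sum_congr rfl fun j _ => by ring
    rw [← e]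
    exact this
  choose a ha using fun c₀ => (mem_rowSpan HX _).mp (hR c₀)
  refine (mem_spanThickX HX HZ HC v).mpr
    ⟨fun a' c => a c a', B, fun i c => ?_, fun z j => ?_⟩
  · have := ha c i
    rw [← this]
    rw [add_assoc, CharTwo.add_self_eq_zero, add_zero]
  · have e : ∑ i, B i j * HZ z i = ∑ c, D j c * ∑ i, HZ z i * v (Sum.inl (i, c)) := by
      simp only [hB, Finset.sum_mul, Finset.mul_sum]
      rw [Finset.sum_comm]
      exact Finset.sum_congr rfl fun i _ => Finset.sum_congr rfl fun c _ => by ring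
    rw [e]
    simp only [hk]
    have e2 : ∑ c, D j c * ∑ j', HC j' c * v (Sum.inr (z, j')) =
        ∑ j', (∑ c, HC j' c * D j c) * v (Sum.inr (z, j')) := by
      simp only [Finset.mul_sum, Finset.sum_mul]
      rw [Finset.sum_comm]
      exact Finset.sum_congr rfl fun j' _ => Finset.sum_congr rfl fun c _ => by ring
    rw [e2]
    simp [hD, eq_comm]

section Dim

lemma col_mem_kerMat (v : ↥(kerMat (dualThickX HX HZ HC))) (c : Fin nc) :
    (fun i => v.1 (Sum.inl (i, c))) ∈ kerMat HX := by
  rw [mem_kerMat]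
  exact fun a => ((mem_kerThickX HX HZ HC v.1).mp v.2).1 c a

noncomputable def Ssub : Submodule (ZMod 2)
    (Fin nc → (↥(kerMat HX) ⧸ (rowSpan HZ).comap (kerMat HX).subtype)) where
  carrier := {lam | ∀ j, ∑ c, HC j c • lam c = 0}
  add_mem' := by
    intro a b ha hb
    intro j
    simp only [Pi.add_apply, smul_add, Finset.sum_add_distrib, ha j, hb j, add_zero]
  zero_mem' := by intro j; simp
  smul_mem' := by
    intro t a ha
    intro j
    have : ∀ c, HC j c • (t • a c) = t • (HC j c • a c) := fun c => smul_comm _ _ _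
    simp only [Pi.smul_apply, this, ← Finset.smul_sum, ha j, smul_zero]

noncomputable def colMap (c : Fin nc) :
    ↥(kerMat (dualThickX HX HZ HC)) →ₗ[ZMod 2] ↥(kerMat HX) :=
  LinearMap.codRestrict (kerMat HX)
    ((LinearMap.funLeft (ZMod 2) (ZMod 2) (fun i => Sum.inl (i, c))).comp
      (kerMat (dualThickX HX HZ HC)).subtype)
    (fun v => col_mem_kerMat HX HZ HC v c)

noncomputable def Phi : ↥(kerMat (dualThickX HX HZ HC)) →ₗ[ZMod 2]
    (Fin nc → (↥(kerMat HX) ⧸ (rowSpan HZ).comap (kerMat HX).subtype)) :=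
  LinearMap.pi fun c =>
    ((rowSpan HZ).comap (kerMat HX).subtype).mkQ.comp (colMap HX HZ HC c)

lemma Phi_apply (v : ↥(kerMat (dualThickX HX HZ HC))) (c : Fin nc) :
    Phi HX HZ HC v c = ((rowSpan HZ).comap (kerMat HX).subtype).mkQ
      ⟨fun i => v.1 (Sum.inl (i, c)), col_mem_kerMat HX HZ HC v c⟩ := rfl

lemma ker_Phi (D : Matrix (Fin r) (Fin nc) (ZMod 2))
    (hD : ∀ j j', ∑ c, HC j c * D j' c = if j = j' then 1 else 0) :
    LinearMap.ker (Phi HX HZ HC) =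
      (rowSpan (dualThickZ HZ HC)).comap (kerMat (dualThickX HX HZ HC)).subtype := by
  ext v
  rw [LinearMap.mem_ker, Submodule.mem_comap, Submodule.subtype_apply]
  constructor
  · intro h
    refine spanZ_of_cols HX HZ HC D hD v.1 v.2 fun c => ?_
    have := congrFun h c
    rw [Phi_apply, Pi.zero_apply, Submodule.mkQ_apply, Submodule.Quotient.mk_eq_zero,
      Submodule.mem_comap, Submodule.subtype_apply] at this
    exact this
  · intro h
    funext c
    rw [Phi_apply, Pi.zero_apply, Submodule.mkQ_apply, Submodule.Quotient.mk_eq_zero,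
      Submodule.mem_comap, Submodule.subtype_apply]
    obtain ⟨M, h1, h2⟩ := (mem_spanThickZ HZ HC v.1).mp h
    exact (mem_rowSpan HZ _).mpr ⟨fun z => M z c, fun i => h1 i c⟩

lemma range_Phi : LinearMap.range (Phi HX HZ HC) = Ssub HX HZ HC := by
  ext lam
  constructor
  · rintro ⟨v, rfl⟩
    intro j
    have hk2 := ((mem_kerThickX HX HZ HC v.1).mp v.2).2
    simp only [Phi_apply]
    simp only [← _root_.map_smul, ← map_sum]
    rw [Submodule.mkQ_apply, Submodule.Quotient.mk_eq_zero, Submodule.mem_comap,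
      Submodule.subtype_apply]
    refine (mem_rowSpan HZ _).mpr ⟨fun z => v.1 (Sum.inr (z, j)), fun i => ?_⟩
    have hcoe : (((∑ c, HC j c • (⟨fun i => v.1 (Sum.inl (i, c)),
        col_mem_kerMat HX HZ HC v c⟩ : ↥(kerMat HX))) : ↥(kerMat HX)) : Fin n → ZMod 2) i =
        ∑ c, HC j c * v.1 (Sum.inl (i, c)) := by
      simp [AddSubmonoidClass.coe_finset_sum, Finset.sum_apply]
    rw [hcoe, hk2 i j]
    exact Finset.sum_congr rfl fun z _ => mul_comm _ _
  · intro hlam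
    have hsur := Submodule.Quotient.mk_surjective
      ((rowSpan HZ).comap (kerMat HX).subtype)
    choose t ht using fun c => hsur (lam c)
    have hmem : ∀ j, (((∑ c, HC j c • t c) : ↥(kerMat HX)) : Fin n → ZMod 2) ∈ rowSpan HZ := by
      intro j
      have : Submodule.Quotient.mk (p := (rowSpan HZ).comap (kerMat HX).subtype)
          (∑ c, HC j c • t c) = 0 := by
        rw [← Submodule.mkQ_apply, map_sum]
        simp only [_root_.map_smul]
        simp only [Submodule.mkQ_apply, ht]
        exact hlam j
      rw [Submodule.Quotient.mk_eq_zero, Submodule.mem_comap, Submodule.subtype_apply] at this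
      exact this
    have hval : ∀ j i, (((∑ c, HC j c • t c) : ↥(kerMat HX)) : Fin n → ZMod 2) i =
        ∑ c, HC j c * (t c).1 i := by
      intro j i
      simp [AddSubmonoidClass.coe_finset_sum, Finset.sum_apply]
    choose m hm using fun j => (mem_rowSpan HZ _).mp (hmem j)
    set V : (Fin n × Fin nc) ⊕ (Fin nZ × Fin r) → ZMod 2 :=
      fun p => match p with
        | Sum.inl (i, c) => (t c).1 i
        | Sum.inr (z, j) => m j z with hV
    have hVker : V ∈ kerMat (dualThickX HX HZ HC) := by
      rw [mem_kerThickX]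
      constructor
      · intro c a
        exact (mem_kerMat HX _).mp (t c).2 a
      · intro i j
        have := hm j i
        rw [hval j i] at this
        rw [show (∑ c, HC j c * V (Sum.inl (i, c))) = ∑ c, HC j c * (t c).1 i from rfl, this]
        exact Finset.sum_congr rfl fun z _ => mul_comm _ _
    refine ⟨⟨V, hVker⟩, ?_⟩
    funext c
    rw [Phi_apply, Submodule.mkQ_apply]
    rw [← ht c]

lemma finrank_S_gen {Q : Type*} [AddCommGroup Q] [Module (ZMod 2) Q]
    {k : ℕ} (β : Module.Basis (Fin k) (ZMod 2) Q)
    (S : Submodule (ZMod 2) (Fin nc → Q))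
    (hS : ∀ lam, lam ∈ S ↔ ∀ j, ∑ c, HC j c • lam c = 0) :
    Module.finrank (ZMod 2) ↥S = k * Module.finrank (ZMod 2) ↥(kerMat HC) := by
  classical
  have hrepr_mem : ∀ (lam : ↥S) (b : Fin k),
      (fun c => β.repr (lam.1 c) b) ∈ kerMat HC := by
    intro lam b
    rw [mem_kerMat]
    intro j
    have h0 := (hS lam.1).mp lam.2 j
    have : ∑ c, HC j c * β.repr (lam.1 c) b =
        β.repr (∑ c, HC j c • lam.1 c) b := by
      rw [map_sum, Finsupp.finset_sum_apply]
      exact Finset.sum_congr rfl fun c _ => by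
        rw [_root_.map_smul, Finsupp.smul_apply, smul_eq_mul]
    rw [this, h0]
    simp
  have hsum_mem : ∀ g : Fin k → ↥(kerMat HC),
      (fun c => ∑ b, (g b).1 c • β b) ∈ S := by
    intro g
    rw [hS]
    intro j
    have : ∀ c, HC j c • ∑ b, (g b).1 c • β b = ∑ b, (HC j c * (g b).1 c) • β b := by
      intro c
      rw [Finset.smul_sum]
      exact Finset.sum_congr rfl fun b _ => by rw [smul_smul]
    simp only [this]
    rw [Finset.sum_comm]
    refine Finset.sum_eq_zero fun b _ => ?_
    rw [← Finset.sum_smul]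
    have : ∑ c, HC j c * (g b).1 c = 0 := (mem_kerMat HC _).mp (g b).2 j
    rw [this, zero_smul]
  let E : ↥S ≃ₗ[ZMod 2] (Fin k → ↥(kerMat HC)) :=
    { toFun := fun lam => fun b => ⟨fun c => β.repr (lam.1 c) b, hrepr_mem lam b⟩
      invFun := fun g => ⟨fun c => ∑ b, (g b).1 c • β b, hsum_mem g⟩
      left_inv := by
        intro lam
        apply Subtype.ext
        funext c
        exact β.sum_repr (lam.1 c)
      right_inv := by
        intro g
        funext b
        apply Subtype.ext
        funext c
        show β.repr (∑ b', (g b').1 c • β b') b = (g b).1 c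
        rw [map_sum]
        rw [Finsupp.finset_sum_apply]
        have : ∀ b', (β.repr ((g b').1 c • β b')) b =
            (g b').1 c * (if b' = b then 1 else 0) := by
          intro b'
          rw [_root_.map_smul, Module.Basis.repr_self, Finsupp.smul_apply, smul_eq_mul,
            Finsupp.single_apply]
        simp only [this, mul_ite, mul_one, mul_zero, Finset.sum_ite_eq', Finset.mem_univ,
          if_true]
      map_add' := by
        intro x y
        funext b
        apply Subtype.ext
        funext c
        show β.repr ((x + y).1 c) b = _
        rw [Submodule.coe_add, Pi.add_apply, map_add, Finsupp.add_apply]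
        rfl
      map_smul' := by
        intro t x
        funext b
        apply Subtype.ext
        funext c
        show β.repr ((t • x).1 c) b = _
        rw [Submodule.coe_smul, Pi.smul_apply, _root_.map_smul, Finsupp.smul_apply]
        rfl }
  rw [LinearEquiv.finrank_eq E, Module.finrank_pi_fintype, Finset.sum_const,
    Finset.card_univ, Fintype.card_fin, smul_eq_mul]

lemma finrank_Ssub :
    Module.finrank (ZMod 2) ↥(Ssub HX HZ HC) =
      logicalDim HX HZ * Module.finrank (ZMod 2) ↥(kerMat HC) := by
  haveI : FiniteDimensional (ZMod 2)
      (↥(kerMat HX) ⧸ (rowSpan HZ).comap (kerMat HX).subtype) := inferInstance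
  exact finrank_S_gen HC
    (Module.finBasis (ZMod 2) (↥(kerMat HX) ⧸ (rowSpan HZ).comap (kerMat HX).subtype))
    (Ssub HX HZ HC) (fun lam => Iff.rfl)

lemma dim_thick (D : Matrix (Fin r) (Fin nc) (ZMod 2))
    (hD : ∀ j j', ∑ c, HC j c * D j' c = if j = j' then 1 else 0) :
    logicalDim (dualThickX HX HZ HC) (dualThickZ HZ HC) =
      logicalDim HX HZ * Module.finrank (ZMod 2) ↥(LinearMap.ker HC.mulVecLin) := by
  have e0 : (rowSpan (dualThickZ HZ HC)).comap (kerMat (dualThickX HX HZ HC)).subtype =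
      LinearMap.ker (Phi HX HZ HC) := (ker_Phi HX HZ HC D hD).symm
  rw [logicalDim, e0]
  rw [LinearEquiv.finrank_eq (LinearMap.quotKerEquivRange (Phi HX HZ HC))]
  rw [show Module.finrank (ZMod 2) ↥(LinearMap.range (Phi HX HZ HC)) =
      Module.finrank (ZMod 2) ↥(Ssub HX HZ HC) from by rw [range_Phi]]
  exact finrank_Ssub HX HZ HC

end Dim


lemma kerMat_iff_mulVec {ι κ : Type*} [Fintype ι] [Fintype κ] (M : Matrix ι κ (ZMod 2))
    (v : κ → ZMod 2) : v ∈ kerMat M ↔ M.mulVec v = 0 := by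
  simp [kerMat, LinearMap.mem_ker]

lemma orth (hcss : HX * HZ.transpose = 0) :
    dualThickX HX HZ HC * (dualThickZ HZ HC).transpose = 0 := by
  have hcss' : ∀ a z, ∑ i, HX a i * HZ z i = 0 := by
    intro a z
    have := congrFun (congrFun hcss a) z
    simpa [Matrix.mul_apply, Matrix.transpose_apply] using this
  ext s t
  rw [Matrix.mul_apply, Matrix.zero_apply]
  obtain ⟨z, c⟩ := t
  match s with
  | Sum.inl (a, c') =>
    rw [Fintype.sum_sum_type]
    have h2 : ∑ p : Fin nZ × Fin r,
        dualThickX HX HZ HC (Sum.inl (a, c')) (Sum.inr p) *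
          (dualThickZ HZ HC).transpose (Sum.inr p) (z, c) = 0 := by
      simp [dualThickX]
    rw [h2, add_zero]
    rw [Fintype.sum_prod_type]
    rw [Finset.sum_comm]
    simp only [dualThickX, dualThickZ, Matrix.transpose_apply, Matrix.of_apply, ite_mul,
      mul_ite, zero_mul, mul_zero]
    by_cases hcc : c' = c
    · subst hcc
      simp [Finset.sum_ite_eq', hcss']
    · rw [Finset.sum_eq_zero]
      intro c₁ _
      rw [Finset.sum_eq_zero]
      intro i _
      by_cases h1 : c₁ = c' <;> by_cases h2 : c₁ = c <;> simp_all
  | Sum.inr (i, j) =>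
    rw [Fintype.sum_sum_type]
    have h1 : ∑ p : Fin n × Fin nc,
        dualThickX HX HZ HC (Sum.inr (i, j)) (Sum.inl p) *
          (dualThickZ HZ HC).transpose (Sum.inl p) (z, c) = HC j c * HZ z i := by
      rw [Fintype.sum_prod_type]
      simp only [dualThickX, dualThickZ, Matrix.transpose_apply, Matrix.of_apply, ite_mul,
        mul_ite, zero_mul, mul_zero]
      simp [Finset.sum_ite_eq, Finset.sum_ite_eq']
    have h2 : ∑ p : Fin nZ × Fin r,
        dualThickX HX HZ HC (Sum.inr (i, j)) (Sum.inr p) *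
          (dualThickZ HZ HC).transpose (Sum.inr p) (z, c) = HZ z i * HC j c := by
      rw [Fintype.sum_prod_type]
      simp only [dualThickX, dualThickZ, Matrix.transpose_apply, Matrix.of_apply, ite_mul,
        mul_ite, zero_mul, mul_zero]
      simp [Finset.sum_ite_eq, Finset.sum_ite_eq']
    rw [h1, h2, mul_comm]
    exact CharTwo.add_self_eq_zero _

lemma distX (D : Matrix (Fin r) (Fin nc) (ZMod 2))
    (hD : ∀ j j', ∑ c, HC j c * D j' c = if j = j' then 1 else 0)
    (hkc : ∃ v : Fin nc → ZMod 2, HC.mulVec v = 0 ∧ v ≠ 0)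
    (hXlog : (logicalSet HZ HX).Nonempty) :
    minWt (logicalSet (dualThickZ HZ HC) (dualThickX HX HZ HC)) =
      minWt (logicalSet HZ HX) := by
  classical
  obtain ⟨v₀, hv₀, hwt⟩ := Nat.sInf_mem (hXlog.image hammingNorm)
  obtain ⟨hv₀ker, hv₀span⟩ := hv₀
  obtain ⟨κ, hκker, hκne⟩ := hkc
  obtain ⟨c₀, hc₀⟩ := Function.ne_iff.mp hκne
  set V : (Fin n × Fin nc) ⊕ (Fin nZ × Fin r) → ZMod 2 :=
    fun p => match p with
      | Sum.inl (i, c) => if c = c₀ then v₀ i else 0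
      | Sum.inr _ => 0 with hV
  have hVker : V ∈ kerMat (dualThickZ HZ HC) := by
    rw [mem_kerThickZ]
    intro z c
    have : ∀ i, HZ z i * V (Sum.inl (i, c)) = if c = c₀ then HZ z i * v₀ i else 0 := by
      intro i
      by_cases h : c = c₀ <;> simp [hV, h]
    simp only [this]
    have hz := (mulVec_eq_zero_iff HZ v₀).mp hv₀ker z
    by_cases h : c = c₀ <;> simp [hV, h, hz]
  have hVspan : V ∉ rowSpan (dualThickX HX HZ HC) := by
    intro h
    obtain ⟨A, B, h1, h2⟩ := (mem_spanThickX HX HZ HC V).mp h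
    apply hv₀span
    refine (mem_rowSpan HX v₀).mpr ⟨fun a => ∑ c, A a c * κ c, fun i => ?_⟩
    have key : ∑ c, V (Sum.inl (i, c)) * κ c = v₀ i := by
      have : ∀ c, V (Sum.inl (i, c)) * κ c = if c = c₀ then v₀ i * κ c else 0 := by
        intro c
        by_cases h : c = c₀ <;> simp [hV, h]
      simp only [this, Finset.sum_ite_eq', Finset.mem_univ, if_true]
      rw [z2_eq_one hc₀, mul_one]
    rw [← key]
    have expand : ∑ c, V (Sum.inl (i, c)) * κ c =
        (∑ a, (∑ c, A a c * κ c) * HX a i) + ∑ j, B i j * ∑ c, HC j c * κ c := by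
      simp only [h1, add_mul, Finset.sum_add_distrib, Finset.sum_mul, Finset.mul_sum]
      congr 1
      · rw [Finset.sum_comm]
        exact Finset.sum_congr rfl fun a _ => Finset.sum_congr rfl fun c _ => by ring
      · rw [Finset.sum_comm]
        exact Finset.sum_congr rfl fun j _ => Finset.sum_congr rfl fun c _ => by ring
    rw [expand]
    have hzero : ∀ j, ∑ c, HC j c * κ c = 0 := (mulVec_eq_zero_iff HC κ).mp hκker
    simp [hzero]
  have hVwt : hammingNorm V = hammingNorm v₀ := by
    rw [hammingNorm_eq_sum, hammingNorm_eq_sum, Fintype.sum_sum_type, Fintype.sum_prod_type]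
    have hinr : ∑ p : Fin nZ × Fin r, (if V (Sum.inr p) = 0 then 0 else 1) = 0 := by
      simp [hV]
    rw [hinr, add_zero]
    rw [Finset.sum_comm]
    have : ∀ c i, (if V (Sum.inl (i, c)) = 0 then 0 else 1) =
        if c = c₀ then (if v₀ i = 0 then 0 else 1) else 0 := by
      intro c i
      by_cases h : c = c₀ <;> simp [hV, h]
    simp only [this]
    simp [Finset.sum_ite_eq']
  apply le_antisymm
  · unfold minWt
    rw [← hwt]
    exact Nat.sInf_le ⟨V, ⟨(kerMat_iff_mulVec _ _).mp hVker, hVspan⟩, hVwt⟩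
  · unfold minWt
    refine le_csInf ⟨hammingNorm V, ⟨V, ⟨(kerMat_iff_mulVec _ _).mp hVker, hVspan⟩, rfl⟩⟩ ?_
    rintro m ⟨W, ⟨hWker, hWspan⟩, rfl⟩
    have hWk : W ∈ kerMat (dualThickZ HZ HC) := (kerMat_iff_mulVec _ _).mpr hWker
    have hex : ∃ κ' : Fin nc → ZMod 2, HC.mulVec κ' = 0 ∧
        (fun i => ∑ c, W (Sum.inl (i, c)) * κ' c) ∉ rowSpan HX := by
      by_contra hcon
      push_neg at hcon
      exact hWspan (spanX_of_contractions HX HZ HC D hD W hWk fun κ' hκ' => hcon κ' hκ')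
    obtain ⟨κ', hκ'ker, hκ'span⟩ := hex
    set vκ : Fin n → ZMod 2 := fun i => ∑ c, W (Sum.inl (i, c)) * κ' c with hvκ
    have hvκker : HZ.mulVec vκ = 0 := by
      rw [mulVec_eq_zero_iff]
      intro z
      have hk := (mem_kerThickZ HZ HC W).mp hWk
      have e1 : ∑ i, HZ z i * vκ i = ∑ c, κ' c * ∑ i, HZ z i * W (Sum.inl (i, c)) := by
        simp only [hvκ, Finset.mul_sum]
        rw [Finset.sum_comm]
        exact Finset.sum_congr rfl fun c _ => Finset.sum_congr rfl fun i _ => by ring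
      rw [e1]
      simp only [hk]
      have e2 : ∑ c, κ' c * ∑ j, HC j c * W (Sum.inr (z, j)) =
          ∑ j, W (Sum.inr (z, j)) * ∑ c, HC j c * κ' c := by
        simp only [Finset.mul_sum, Finset.sum_mul]
        rw [Finset.sum_comm]
        exact Finset.sum_congr rfl fun j _ => Finset.sum_congr rfl fun c _ => by ring
      rw [e2]
      have hzero : ∀ j, ∑ c, HC j c * κ' c = 0 := (mulVec_eq_zero_iff HC κ').mp hκ'ker
      simp [hzero]
    have hle1 : minWt (logicalSet HZ HX) ≤ hammingNorm vκ :=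
      Nat.sInf_le ⟨vκ, ⟨hvκker, hκ'span⟩, rfl⟩
    refine hle1.trans ?_
    rw [hammingNorm_eq_sum, hammingNorm_eq_sum, Fintype.sum_sum_type, Fintype.sum_prod_type]
    refine le_trans ?_ (Nat.le_add_right _ _)
    refine Finset.sum_le_sum fun i _ => ?_
    by_cases h : vκ i = 0
    · simp [h]
    · rw [if_neg h]
      have : ∃ c, W (Sum.inl (i, c)) ≠ 0 := by
        by_contra hc
        push_neg at hc
        apply h
        simp [hvκ, hc]
      obtain ⟨c, hc⟩ := this
      have hs := Finset.single_le_sum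
        (f := fun c' => if W (Sum.inl (i, c')) = 0 then (0 : ℕ) else 1)
        (fun _ _ => Nat.zero_le _) (Finset.mem_univ c)
      simpa [if_neg hc] using hs

lemma distZ (D : Matrix (Fin r) (Fin nc) (ZMod 2))
    (hD : ∀ j j', ∑ c, HC j c * D j' c = if j = j' then 1 else 0)
    (hkc : ∃ v : Fin nc → ZMod 2, HC.mulVec v = 0 ∧ v ≠ 0)
    (hZlog : (logicalSet HX HZ).Nonempty) :
    minWt (logicalSet (dualThickX HX HZ HC) (dualThickZ HZ HC)) =
      minWt (logicalSet HX HZ) *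
        sInf (hammingNorm '' {v : Fin nc → ZMod 2 | HC.mulVec v = 0 ∧ v ≠ 0}) := by
  classical
  obtain ⟨v₁, hv₁, hwt₁⟩ := Nat.sInf_mem (hZlog.image hammingNorm)
  obtain ⟨hv₁ker, hv₁span⟩ := hv₁
  have hKcne : ({v : Fin nc → ZMod 2 | HC.mulVec v = 0 ∧ v ≠ 0}).Nonempty := hkc
  obtain ⟨κ₁, hκ₁, hwtκ⟩ := Nat.sInf_mem (hKcne.image hammingNorm)
  obtain ⟨hκ₁ker, hκ₁ne⟩ := hκ₁
  obtain ⟨c₀, hc₀⟩ := Function.ne_iff.mp hκ₁ne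
  set dZ := sInf (hammingNorm '' logicalSet HX HZ) with hdZ
  set dc := sInf (hammingNorm '' {v : Fin nc → ZMod 2 | HC.mulVec v = 0 ∧ v ≠ 0}) with hdc
  set V : (Fin n × Fin nc) ⊕ (Fin nZ × Fin r) → ZMod 2 :=
    fun p => match p with
      | Sum.inl (i, c) => v₁ i * κ₁ c
      | Sum.inr _ => 0 with hV
  have hVker : V ∈ kerMat (dualThickX HX HZ HC) := by
    rw [mem_kerThickX]
    constructor
    · intro c a
      have : ∑ i, HX a i * V (Sum.inl (i, c)) = κ₁ c * ∑ i, HX a i * v₁ i := by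
        rw [Finset.mul_sum]
        exact Finset.sum_congr rfl fun i _ => by show HX a i * (v₁ i * κ₁ c) = _; ring
      rw [this, (mulVec_eq_zero_iff HX v₁).mp hv₁ker a, mul_zero]
    · intro i j
      have e1 : ∑ c, HC j c * V (Sum.inl (i, c)) = v₁ i * ∑ c, HC j c * κ₁ c := by
        rw [Finset.mul_sum]
        exact Finset.sum_congr rfl fun c _ => by show HC j c * (v₁ i * κ₁ c) = _; ring
      rw [e1, (mulVec_eq_zero_iff HC κ₁).mp hκ₁ker j, mul_zero]
      simp [hV]
  have hVspan : V ∉ rowSpan (dualThickZ HZ HC) := by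
    intro h
    obtain ⟨M, h1, h2⟩ := (mem_spanThickZ HZ HC V).mp h
    apply hv₁span
    refine (mem_rowSpan HZ v₁).mpr ⟨fun z => M z c₀, fun i => ?_⟩
    have := h1 i c₀
    rw [show V (Sum.inl (i, c₀)) = v₁ i * κ₁ c₀ from rfl] at this
    rw [z2_eq_one (a := κ₁ c₀) (by simpa using hc₀), mul_one] at this
    exact this
  have hVwt : hammingNorm V = hammingNorm v₁ * hammingNorm κ₁ := by
    rw [hammingNorm_eq_sum, hammingNorm_eq_sum, hammingNorm_eq_sum, Fintype.sum_sum_type,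
      Fintype.sum_prod_type]
    have hinr : ∑ p : Fin nZ × Fin r, (if V (Sum.inr p) = 0 then 0 else 1) = 0 := by
      simp [hV]
    rw [hinr, add_zero, Finset.sum_mul_sum]
    refine Finset.sum_congr rfl fun i _ => Finset.sum_congr rfl fun c _ => ?_
    rw [show V (Sum.inl (i, c)) = v₁ i * κ₁ c from rfl]
    rcases eq_or_ne (v₁ i) 0 with h | h <;> rcases eq_or_ne (κ₁ c) 0 with h' | h' <;>
      simp [h, h', mul_eq_zero]
  apply le_antisymm
  · unfold minWt
    refine Nat.sInf_le ⟨V, ⟨(kerMat_iff_mulVec _ _).mp hVker, hVspan⟩, ?_⟩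
    rw [hVwt, hwt₁, hwtκ]
  · unfold minWt
    rw [← hdZ]
    refine le_csInf ⟨hammingNorm V, ⟨V, ⟨(kerMat_iff_mulVec _ _).mp hVker, hVspan⟩, rfl⟩⟩ ?_
    rintro m ⟨W, ⟨hWker, hWspan⟩, rfl⟩
    have hWk : W ∈ kerMat (dualThickX HX HZ HC) := (kerMat_iff_mulVec _ _).mpr hWker
    obtain ⟨hk1, hk2⟩ := (mem_kerThickX HX HZ HC W).mp hWk
    have hcolker : ∀ c, (fun i => W (Sum.inl (i, c))) ∈ kerMat HX := by
      intro c
      rw [mem_kerMat]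
      exact fun a => hk1 c a
    have hex : ∃ c₁, (fun i => W (Sum.inl (i, c₁))) ∉ rowSpan HZ := by
      by_contra hcon
      push_neg at hcon
      exact hWspan (spanZ_of_cols HX HZ HC D hD W hWk hcon)
    obtain ⟨c₁, hc₁⟩ := hex
    obtain ⟨f, hf0, hfne⟩ := exists_functional HZ hc₁
    set g : Fin nc → ZMod 2 := fun c => f (fun i => W (Sum.inl (i, c))) with hg
    have hgker : HC.mulVec g = 0 := by
      rw [mulVec_eq_zero_iff]
      intro j
      have e1 : ∑ c, HC j c * g c = f (fun i => ∑ c, HC j c * W (Sum.inl (i, c))) := by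
        have : (fun i => ∑ c, HC j c * W (Sum.inl (i, c))) =
            ∑ c, HC j c • (fun i => W (Sum.inl (i, c))) := by
          funext i
          simp [Finset.sum_apply]
        rw [this, map_sum]
        exact Finset.sum_congr rfl fun c _ => by rw [_root_.map_smul, smul_eq_mul]
      rw [e1]
      refine hf0 _ ((mem_rowSpan HZ _).mpr ⟨fun z => W (Sum.inr (z, j)), fun i => ?_⟩)
      rw [hk2 i j]
      exact Finset.sum_congr rfl fun z _ => mul_comm _ _
    have hgne : g ≠ 0 := Function.ne_iff.mpr ⟨c₁, by simpa [hg] using hfne⟩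
    have hdcg : dc ≤ hammingNorm g := Nat.sInf_le ⟨g, ⟨hgker, hgne⟩, rfl⟩
    have key : ∀ c, (if g c = 0 then 0 else 1) * dZ ≤
        ∑ i, if W (Sum.inl (i, c)) = 0 then 0 else 1 := by
      intro c
      by_cases h : g c = 0
      · simp [h]
      · rw [if_neg h, one_mul]
        have hnot : (fun i => W (Sum.inl (i, c))) ∉ rowSpan HZ := by
          intro hmem
          exact h (hf0 _ hmem)
        have : dZ ≤ hammingNorm (fun i => W (Sum.inl (i, c))) :=
          Nat.sInf_le ⟨_, ⟨(kerMat_iff_mulVec _ _).mp (hcolker c), hnot⟩, rfl⟩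
        rwa [hammingNorm_eq_sum] at this
    calc dZ * dc ≤ dZ * hammingNorm g := Nat.mul_le_mul_left _ hdcg
      _ = ∑ c, (if g c = 0 then 0 else 1) * dZ := by
          rw [hammingNorm_eq_sum, mul_comm, Finset.sum_mul]
      _ ≤ ∑ c, ∑ i, if W (Sum.inl (i, c)) = 0 then 0 else 1 :=
          Finset.sum_le_sum fun c _ => key c
      _ ≤ hammingNorm W := by
          rw [hammingNorm_eq_sum, Fintype.sum_sum_type, Fintype.sum_prod_type]
          rw [Finset.sum_comm]
          exact Nat.le_add_right _ _

end DT

/-- **Dual-basis thickening:** the resulting CSS code has `k·k_c` logical qubits,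
Z distance `d_Z · d_c` and X distance `d_X`. -/
theorem dual_thickening {nX nZ n r nc : ℕ}
    (HX : Matrix (Fin nX) (Fin n) (ZMod 2)) (HZ : Matrix (Fin nZ) (Fin n) (ZMod 2))
    (HC : Matrix (Fin r) (Fin nc) (ZMod 2))
    (hcss : HX * HZ.transpose = 0)
    (hrank : LinearIndependent (ZMod 2) (fun i : Fin r => HC i))
    (hkc : ∃ v : Fin nc → ZMod 2, HC.mulVec v = 0 ∧ v ≠ 0)
    (hXlog : (logicalSet HZ HX).Nonempty) (hZlog : (logicalSet HX HZ).Nonempty) :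
    dualThickX HX HZ HC * (dualThickZ HZ HC).transpose = 0 ∧
      logicalDim (dualThickX HX HZ HC) (dualThickZ HZ HC) =
        logicalDim HX HZ * Module.finrank (ZMod 2) (LinearMap.ker HC.mulVecLin) ∧
      minWt (logicalSet (dualThickX HX HZ HC) (dualThickZ HZ HC)) =
        minWt (logicalSet HX HZ) *
          sInf (hammingNorm '' {v : Fin nc → ZMod 2 | HC.mulVec v = 0 ∧ v ≠ 0}) ∧
      minWt (logicalSet (dualThickZ HZ HC) (dualThickX HX HZ HC)) =
        minWt (logicalSet HZ HX) := by
  obtain ⟨D, hD⟩ := DT.exists_leftInv HC hrank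
  exact ⟨DT.orth HX HZ HC hcss, DT.dim_thick HX HZ HC D hD,
    DT.distZ HX HZ HC D hD hkc hZlog, DT.distX HX HZ HC D hD hkc hXlog⟩
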